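/- For the fusion ring of C(so₅,3/2)_ad with fusion matrices N₀,…,N₅ as given, the assignment X₀ ↦ 1, X₁, X₂, X₅ ↦ u₂, X₃ ↦ u₁u₂, X₄ ↦ u₁⁻¹u₂² (with u₁ = 2cos(π/9)² - 2, u₂ = 1 - ζ₉⁴ - ζ₉⁵ real) is a ring homomorphism to R, i.e., dᵢ dⱼ = Σ_k (Nᵢ)_{j,k} d_k for all i, j, and each dᵢ is the largest eigenvalue of Nᵢ. -/

import Mathlib

noncomputable section

/-- The fusion matrices `N₀, …, N₅` of `C(so₅, 3/2)_ad`. -/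
def N : Fin 6 → Matrix (Fin 6) (Fin 6) ℤ :=
  ![!![1,0,0,0,0,0; 0,1,0,0,0,0; 0,0,1,0,0,0; 0,0,0,1,0,0; 0,0,0,0,1,0; 0,0,0,0,0,1],
    !![0,1,0,0,0,0; 1,0,1,1,0,0; 0,1,0,0,1,0; 0,1,0,1,1,0; 0,0,1,1,1,1; 0,0,0,0,1,1],
    !![0,0,1,0,0,0; 0,1,0,0,1,0; 1,0,0,1,0,1; 0,0,1,1,1,0; 0,1,0,1,1,1; 0,0,1,0,1,0],
    !![0,0,0,1,0,0; 0,1,0,1,1,0; 0,0,1,1,1,0; 1,1,1,1,1,1; 0,1,1,1,2,1; 0,0,0,1,1,1],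
    !![0,0,0,0,1,0; 0,0,1,1,1,1; 0,1,0,1,1,1; 0,1,1,1,2,1; 1,1,1,2,2,1; 0,1,1,1,1,0],
    !![0,0,0,0,0,1; 0,0,0,0,1,1; 0,0,1,0,1,0; 0,0,0,1,1,1; 0,1,1,1,1,0; 1,1,0,1,0,0]]

/-- The unit `u₁ = (2cos(π/9))² - 2` of `Q(ζ₉)⁺` in its real embedding. -/
def r1 : ℝ := (2 * Real.cos (Real.pi / 9)) ^ 2 - 2

/-- The unit `u₂ = 1 - ζ₉⁴ - ζ₉⁵ = 1 - 2cos(8π/9)` of `Q(ζ₉)⁺` in its real embedding. -/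
def r2 : ℝ := 1 - 2 * Real.cos (8 * Real.pi / 9)

/-- The Frobenius–Perron dimensions: `d₀ = 1`, `d₁ = d₂ = d₅ = u₂`, `d₃ = u₁u₂`,
`d₄ = u₁⁻¹u₂²`. -/
def d : Fin 6 → ℝ := ![1, r2, r2, r1 * r2, r1⁻¹ * r2 ^ 2, r2]

/-- The fusion matrices over `ℝ`. -/
def NR (i : Fin 6) : Matrix (Fin 6) (Fin 6) ℝ := (N i).map Int.cast

/-- abbreviation for cos(π/9) -/
@[simp] lemma cons_val_five {α : Type*} {m : ℕ} (x : α)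
    (u : Fin m.succ.succ.succ.succ.succ → α) :
    Matrix.vecCons x u 5 =
      Matrix.vecHead (Matrix.vecTail (Matrix.vecTail (Matrix.vecTail (Matrix.vecTail u)))) :=
  rfl

def cc : ℝ := Real.cos (Real.pi / 9)

lemma hc_cubic : 8 * cc ^ 3 - 6 * cc - 1 = 0 := by
  have h := Real.cos_three_mul (Real.pi / 9)
  have h3 : 3 * (Real.pi / 9) = Real.pi / 3 := by ring
  rw [h3, Real.cos_pi_div_three] at h
  unfold cc; linarith

lemma hc_pos : 0 < cc := by
  apply Real.cos_pos_of_mem_Ioo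
  constructor <;> nlinarith [Real.pi_pos]

lemma hc_sq : 1 / 2 < cc ^ 2 := by
  have h1 : Real.cos (Real.pi / 4) < Real.cos (Real.pi / 9) := by
    apply Real.cos_lt_cos_of_nonneg_of_le_pi
    · positivity
    · nlinarith [Real.pi_pos]
    · nlinarith [Real.pi_pos]
  rw [Real.cos_pi_div_four] at h1
  have h2 : (0:ℝ) ≤ Real.sqrt 2 := Real.sqrt_nonneg 2
  have h3 : Real.sqrt 2 ^ 2 = 2 := Real.sq_sqrt (by norm_num)
  unfold cc
  nlinarith

lemma hr1 : r1 = 4 * cc ^ 2 - 2 := by unfold r1 cc; ring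

lemma hr2 : r2 = 1 + 2 * cc := by
  unfold r2 cc
  have h : 8 * Real.pi / 9 = Real.pi - Real.pi / 9 := by ring
  rw [h, Real.cos_pi_sub]
  ring

lemma hr1_pos : 0 < r1 := by rw [hr1]; nlinarith [hc_sq]

lemma hd4 : (4 * cc ^ 2 - 2)⁻¹ * (1 + 2 * cc) ^ 2 = 2 * cc + 4 * cc ^ 2 := by
  have h : (4 * cc ^ 2 - 2) ≠ 0 := by rw [← hr1]; exact ne_of_gt hr1_pos
  rw [inv_mul_eq_div, div_eq_iff h]
  linear_combination (-(2 * cc + 1)) * hc_cubic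

lemma hD : d = ![1, 1 + 2 * cc, 1 + 2 * cc, (4 * cc ^ 2 - 2) * (1 + 2 * cc),
    2 * cc + 4 * cc ^ 2, 1 + 2 * cc] := by
  funext k
  fin_cases k <;> simp [d, hr1, hr2, hd4]

lemma hd_pos : ∀ k, 0 < d k := by
  intro k
  rw [hD]
  fin_cases k <;> simp <;> nlinarith [hc_sq, hc_pos]

set_option maxHeartbeats 2000000 in
lemma hsym : ∀ i j k, N i j k = N i k j := by
  intro i j k; fin_cases i <;> fin_cases j <;> fin_cases k <;> rfl

set_option maxHeartbeats 2000000 in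
lemma hN_nonneg : ∀ i j k, (0:ℤ) ≤ N i j k := by
  intro i j k; fin_cases i <;> fin_cases j <;> fin_cases k <;> decide

lemma part1 : ∀ i j, d i * d j = ∑ k : Fin 6, (N i j k : ℝ) * d k := by
  have hc := hc_cubic
  intro i j
  fin_cases i <;> fin_cases j <;>
    simp [hD, N, Fin.sum_univ_six] <;>
    first
      | ring1
      | linear_combination -hc
      | linear_combination (2 * cc + 1) * hc
      | linear_combination (8 * cc ^ 3 + 8 * cc ^ 2 - 2) * hc
      | linear_combination (4 * cc ^ 2 + 4 * cc + 1) * hc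
      | linear_combination (2 * cc) * hc

/-- The assignment `Xᵢ ↦ dᵢ` is a ring homomorphism of the fusion ring of
`C(so₅,3/2)_ad` to `ℝ`, i.e. `dᵢ dⱼ = Σ_k (Nᵢ)_{j,k} d_k`, and each `dᵢ` is the
largest (real) eigenvalue of `Nᵢ`. -/
theorem stmt19 :
    (∀ i j, d i * d j = ∑ k : Fin 6, (N i j k : ℝ) * d k) ∧
    (∀ i : Fin 6,
      (∃ v : Fin 6 → ℝ, v ≠ 0 ∧ (NR i).mulVec v = d i • v) ∧
      ∀ μ : ℝ, (∃ v : Fin 6 → ℝ, v ≠ 0 ∧ (NR i).mulVec v = μ • v) → μ ≤ d i) := by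
  have hmv : ∀ i (v : Fin 6 → ℝ) j,
      (NR i).mulVec v j = ∑ k : Fin 6, (N i j k : ℝ) * v k := by
    intro i v j
    simp [NR, Matrix.mulVec, dotProduct, Matrix.map_apply]
  refine ⟨part1, fun i => ⟨⟨d, ?_, ?_⟩, ?_⟩⟩
  · intro h
    have := congrFun h 0
    have h0 : d 0 = 1 := by rw [hD]; simp
    simp [h0] at this
  · funext j
    rw [hmv, Pi.smul_apply, smul_eq_mul, ← part1 i j]
  · rintro μ ⟨v, hv0, hv⟩
    set w : Fin 6 → ℝ := fun k => |v k| with hw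
    have hwnn : ∀ k, 0 ≤ w k := fun k => abs_nonneg _
    have hrow : ∀ j, |μ| * w j ≤ ∑ k : Fin 6, (N i j k : ℝ) * w k := by
      intro j
      have hj : (NR i).mulVec v j = μ * v j := by
        rw [hv]; simp
      calc |μ| * w j = |μ * v j| := by rw [hw]; simp [abs_mul]
        _ = |∑ k : Fin 6, (N i j k : ℝ) * v k| := by rw [← hj, hmv]
        _ ≤ ∑ k : Fin 6, |(N i j k : ℝ) * v k| := Finset.abs_sum_le_sum_abs _ _
        _ = ∑ k : Fin 6, (N i j k : ℝ) * w k := by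
            apply Finset.sum_congr rfl
            intro k _
            rw [abs_mul, abs_of_nonneg (by exact_mod_cast hN_nonneg i j k)]
    have left_eig : ∀ k, ∑ j : Fin 6, (N i j k : ℝ) * d j = d i * d k := by
      intro k
      have : ∑ j : Fin 6, (N i j k : ℝ) * d j = ∑ j : Fin 6, (N i k j : ℝ) * d j := by
        apply Finset.sum_congr rfl
        intro j _
        rw [hsym i j k]
      rw [this, ← part1 i k]
    have hS : 0 < ∑ k : Fin 6, d k * w k := by
      obtain ⟨k0, hk0⟩ := Function.ne_iff.mp hv0
      apply Finset.sum_pos'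
      · intro k _
        exact mul_nonneg (hd_pos k).le (hwnn k)
      · exact ⟨k0, Finset.mem_univ k0,
          mul_pos (hd_pos k0) (abs_pos.mpr hk0)⟩
    have key : |μ| * (∑ k : Fin 6, d k * w k) ≤ d i * (∑ k : Fin 6, d k * w k) := by
      have h1 : ∑ j : Fin 6, d j * (|μ| * w j)
          ≤ ∑ j : Fin 6, d j * (∑ k : Fin 6, (N i j k : ℝ) * w k) :=
        Finset.sum_le_sum fun j _ =>
          mul_le_mul_of_nonneg_left (hrow j) (hd_pos j).le
      have h2 : ∑ j : Fin 6, d j * (∑ k : Fin 6, (N i j k : ℝ) * w k)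
          = d i * (∑ k : Fin 6, d k * w k) := by
        calc ∑ j : Fin 6, d j * (∑ k : Fin 6, (N i j k : ℝ) * w k)
            = ∑ j : Fin 6, ∑ k : Fin 6, ((N i j k : ℝ) * d j) * w k := by
              apply Finset.sum_congr rfl
              intro j _
              rw [Finset.mul_sum]
              apply Finset.sum_congr rfl
              intro k _
              ring
          _ = ∑ k : Fin 6, ∑ j : Fin 6, ((N i j k : ℝ) * d j) * w k :=
              Finset.sum_comm
          _ = ∑ k : Fin 6, (d i * d k) * w k := by
              apply Finset.sum_congr rfl
              intro k _
              rw [← Finset.sum_mul, left_eig]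
          _ = d i * (∑ k : Fin 6, d k * w k) := by
              rw [Finset.mul_sum]
              apply Finset.sum_congr rfl
              intro k _
              ring
      calc |μ| * (∑ k : Fin 6, d k * w k) = ∑ j : Fin 6, d j * (|μ| * w j) := by
            rw [Finset.mul_sum]
            apply Finset.sum_congr rfl
            intro k _
            ring
        _ ≤ _ := h1
        _ = _ := h2
    have habs : |μ| ≤ d i := le_of_mul_le_mul_left
      (by rw [mul_comm (|μ|), mul_comm (d i)] at key; exact key) hS
    exact le_trans (le_abs_self μ) habs
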